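/- Let (w, t) be a perceptron of dimension n and e ∈ {0,1,⊥}^n a partial instance. Then every completion e' of e satisfies w · e' < t if and only if (Σ over i with e[i] ∈ {0,1} of w_i·e[i]) + (Σ over i with e[i] = ⊥ of max(0, w_i)) < t. -/

import Mathlib

/-- A partial instance of dimension `n` is a tuple in `{0,1,⊥}^n`. -/
def Subsumes {n : ℕ} (e₁ e₂ : Fin n → Option Bool) : Prop :=
  ∀ i, e₁ i ≠ none → e₁ i = e₂ i

theorem allCompletionsNeg_iff {n : ℕ} (w : Fin n → ℝ) (t : ℝ) (e : Fin n → Option Bool) :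
    (∀ e' : Fin n → Bool, Subsumes e (fun i => some (e' i)) →
        ∑ i, w i * (if e' i then 1 else 0) < t) ↔
    (∑ i, (e i).elim (max 0 (w i)) (fun b => w i * (if b then 1 else 0))) < t := by
  constructor
  · intro h
    have := h (fun i => (e i).elim (decide (0 ≤ w i)) id) ?_
    · refine lt_of_eq_of_lt ?_ this
      refine Finset.sum_congr rfl fun i _ => ?_
      cases hei : e i with
      | none =>
        simp only [hei, Option.elim]
        rcases le_or_gt 0 (w i) with hw | hw
        · simp [hw, max_eq_right hw]
        · simp [not_le.mpr hw, max_eq_left hw.le]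
      | some b => cases b <;> simp [hei]
    · intro i hi
      cases hei : e i with
      | none => exact absurd hei hi
      | some b => simp [hei]
  · intro h e' he'
    refine lt_of_le_of_lt (Finset.sum_le_sum fun i _ => ?_) h
    cases hei : e i with
    | none =>
      simp only [hei, Option.elim]
      rcases e' i with _ | _ <;> simp
    | some b =>
      have := he' i (by simp [hei])
      rw [hei] at this
      simp only [hei, Option.elim]
      rw [Option.some_inj.mp this]
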